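/- Let p ≥ 1 be an integer and θ > 0, let (x, λ, y) be a global solution of the closed-loop control system on [0, ∞) with λ nondecreasing, assume A⁻¹(0) = {z : 0 ∈ A z} is nonempty, and assume the error bound condition holds with constants δ > 0 and κ > 0. Set c = 2·(1 + κ/λ(0))^{−2}. Then there exists t₀ ≥ 0 such that for all t ≥ t₀: dist(x(t), A⁻¹(0)) ≤ dist(x(t₀), A⁻¹(0)) · e^{−c(t − t₀)/2}; in particular x(t) converges to A⁻¹(0) at a local linear rate. -/

import Mathlib

open scoped Pointwise
open RealInnerProductSpace Filter Topology Set Metric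

/-- A solution of the closed-loop control system on the time set `T`:
`x` is continuously differentiable with `x'(t) = y(t) - x(t)`,
`y(t)` is the resolvent point `(I + λ(t)A)⁻¹ x(t)` (i.e. `x(t) - y(t) ∈ λ(t) • A (y t)`),
`λ` is continuous and positive, and the algebraic equation
`λ(t) ‖y(t) - x(t)‖^{p-1} = θ` holds. -/
def IsCLSolution {H : Type*} [NormedAddCommGroup H] [InnerProductSpace ℝ H]
    (A : H → Set H) (p : ℕ) (θ : ℝ) (T : Set ℝ)
    (x : ℝ → H) (lam : ℝ → ℝ) (y : ℝ → H) : Prop :=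
  (∀ t ∈ T, 0 < lam t) ∧ ContinuousOn lam T ∧
  (∀ t ∈ T, x t - y t ∈ lam t • A (y t)) ∧
  (∀ t ∈ T, HasDerivWithinAt x (y t - x t) T t) ∧
  ContinuousOn (fun t => y t - x t) T ∧
  (∀ t ∈ T, lam t * ‖y t - x t‖ ^ (p - 1) = θ)


/-- Local linear convergence under the error bound condition: with
`c = 2 (1 + κ/λ(0))⁻²`, there exists `t₀ ≥ 0` such that
`dist(x(t), A⁻¹(0)) ≤ dist(x(t₀), A⁻¹(0)) e^{-c(t - t₀)/2}` for all `t ≥ t₀`. -/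
private lemma aux_anti {g G : ℝ → ℝ} {a b : ℝ} (ha : 0 ≤ a)
    (hg : ∀ t ∈ Set.Ici (0:ℝ), HasDerivWithinAt g (G t) (Set.Ici 0) t)
    (hG : ∀ t ∈ Set.Ioo a b, G t ≤ 0) :
    ∀ s ∈ Set.Icc a b, ∀ t ∈ Set.Icc a b, s ≤ t → g t ≤ g s := by
  have hsub : Set.Icc a b ⊆ Set.Ici (0:ℝ) := fun u hu => le_trans ha hu.1
  have hder : ∀ u ∈ Set.Ioo a b, HasDerivAt g (G u) u := by
    intro u hu
    have hu0 : 0 < u := lt_of_le_of_lt ha hu.1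
    exact (hg u (le_of_lt hu0)).hasDerivAt (Ici_mem_nhds hu0)
  have hanti : AntitoneOn g (Set.Icc a b) := by
    apply antitoneOn_of_deriv_nonpos (convex_Icc a b)
      (fun u hu => ((hg u (hsub hu)).continuousWithinAt).mono hsub)
    · intro u hu
      rw [interior_Icc] at hu
      exact (hder u hu).differentiableAt.differentiableWithinAt
    · intro u hu
      rw [interior_Icc] at hu
      rw [(hder u hu).deriv]
      exact hG u hu
  exact fun s hs t ht hst => hanti hs ht hst


set_option maxHeartbeats 1000000 in
theorem stmt_14 {H : Type*} [NormedAddCommGroup H] [InnerProductSpace ℝ H] [CompleteSpace H]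
    (A : H → Set H)
    (hmono : ∀ x y u v : H, u ∈ A x → v ∈ A y → 0 ≤ ⟪u - v, x - y⟫)
    (p : ℕ) (hp : 1 ≤ p) (θ : ℝ) (hθ : 0 < θ)
    (x : ℝ → H) (lam : ℝ → ℝ) (y : ℝ → H)
    (hsol : IsCLSolution A p θ (Ici 0) x lam y)
    (hlam : MonotoneOn lam (Ici 0))
    (hne : ∃ z : H, 0 ∈ A z)
    (δ κ : ℝ) (hδ : 0 < δ) (hκ : 0 < κ)
    (hEB : ∀ u : H, (A u).Nonempty → sInf ((fun ξ => ‖ξ‖) '' A u) ≤ δ →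
      Metric.infDist u {z : H | 0 ∈ A z} ≤ κ * sInf ((fun ξ => ‖ξ‖) '' A u)) :
    ∃ t₀ : ℝ, 0 ≤ t₀ ∧ ∀ t : ℝ, t₀ ≤ t →
      Metric.infDist (x t) {z : H | 0 ∈ A z}
        ≤ Metric.infDist (x t₀) {z : H | 0 ∈ A z} *
            Real.exp (-(2 * (1 + κ / lam 0)⁻¹ ^ 2) * (t - t₀) / 2) := by
  obtain ⟨hpos, hlamc, hmem, hderiv, hvcont, halg⟩ := hsol
  obtain ⟨z₀, hz₀⟩ := hne
  set S : Set H := {z : H | 0 ∈ A z} with hSdef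
  have hS : S.Nonempty := ⟨z₀, hz₀⟩
  have h0mem : (0:ℝ) ∈ Ici (0:ℝ) := Set.mem_Ici.2 le_rfl
  have hlam0 : 0 < lam 0 := hpos 0 h0mem
  set C : ℝ := 1 + κ / lam 0 with hCdef
  have hC1 : (1:ℝ) ≤ C := le_add_of_nonneg_right (le_of_lt (div_pos hκ hlam0))
  have hC0 : (0:ℝ) < C := lt_of_lt_of_le one_pos hC1
  set c : ℝ := 2 * (1 + κ / lam 0)⁻¹ ^ 2 with hcdef
  have hc0 : (0:ℝ) < c := by
    rw [hcdef, ← hCdef]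
    exact mul_pos two_pos (pow_pos (inv_pos.2 hC0) 2)
  have hcC : c * C ^ 2 = 2 := by
    rw [hcdef, ← hCdef]
    field_simp
  -- the element of A (y t)
  set u : ℝ → H := fun t => (lam t)⁻¹ • (x t - y t) with hudef
  have hu : ∀ t, 0 ≤ t → u t ∈ A (y t) := by
    intro t ht
    obtain ⟨a, ha, hax⟩ := hmem t ht
    have : u t = a := by
      simp only [hudef, ← hax, smul_smul, inv_mul_cancel₀ (ne_of_gt (hpos t ht)), one_smul]
    rwa [this]
  -- key monotonicity inequality
  have hinn : ∀ t, 0 ≤ t → ∀ z ∈ S, 0 ≤ ⟪x t - y t, y t - z⟫ := by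
    intro t ht z hz
    have h1 := hmono (y t) z (u t) 0 (hu t ht) hz
    rw [sub_zero, hudef] at h1
    simp only [real_inner_smul_left] at h1
    have h2 := mul_nonneg (hpos t ht).le h1
    rwa [← mul_assoc, mul_inv_cancel₀ (hpos t ht).ne', one_mul] at h2
  -- derivative inner bound
  have hkeyD : ∀ t, 0 ≤ t → ∀ z ∈ S,
      2 * ⟪x t - z, y t - x t⟫ ≤ -(2 * ‖y t - x t‖ ^ 2) := by
    intro t ht z hz
    have hid : ⟪x t - z, y t - x t⟫
        = -‖y t - x t‖ ^ 2 - ⟪x t - y t, y t - z⟫ := by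
      have hsplit : x t - z = (x t - y t) + (y t - z) := by abel
      rw [hsplit, inner_add_left]
      have h1 : ⟪x t - y t, y t - x t⟫ = -‖y t - x t‖ ^ 2 := by
        rw [show x t - y t = -(y t - x t) by abel, inner_neg_left,
          real_inner_self_eq_norm_sq]
      have h2 : ⟪y t - z, y t - x t⟫ = -⟪x t - y t, y t - z⟫ := by
        rw [show y t - x t = -(x t - y t) by abel, inner_neg_right, real_inner_comm]
      rw [h1, h2]
      ring
    have := hinn t ht z hz
    rw [hid]
    linarith
  -- velocity bounded by distance to any zero
  have hvle : ∀ t, 0 ≤ t → ∀ z ∈ S, ‖y t - x t‖ ≤ ‖x t - z‖ := by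
    intro t ht z hz
    have hsplit : x t - z = (x t - y t) + (y t - z) := by abel
    have hsq : ‖x t - z‖ ^ 2
        = ‖x t - y t‖ ^ 2 + 2 * ⟪x t - y t, y t - z⟫ + ‖y t - z‖ ^ 2 := by
      rw [hsplit, norm_add_sq_real]
    have h1 := hinn t ht z hz
    have h2 : ‖y t - x t‖ ^ 2 ≤ ‖x t - z‖ ^ 2 := by
      rw [norm_sub_rev]
      nlinarith [sq_nonneg ‖y t - z‖]
    exact le_of_pow_le_pow_left₀ two_ne_zero (norm_nonneg _) h2
  have hvled : ∀ t, 0 ≤ t → ‖y t - x t‖ ≤ infDist (x t) S := by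
    intro t ht
    by_contra hlt
    push_neg at hlt
    obtain ⟨z, hz, hdz⟩ := (infDist_lt_iff hS).1 hlt
    rw [dist_eq_norm] at hdz
    exact absurd (hvle t ht z hz) (by linarith)
  -- derivative facts
  have hgd : ∀ z : H, ∀ σ ∈ Set.Ici (0:ℝ),
      HasDerivWithinAt (fun σ' => ‖x σ' - z‖ ^ 2)
        (2 * ⟪x σ - z, y σ - x σ⟫) (Set.Ici 0) σ := by
    intro z σ hσ
    have h := ((hderiv σ hσ).sub_const z).norm_sq
    simpa using h
  -- distance to a fixed zero is nonincreasing, hence infDist nonincreasing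
  have hnorm_anti : ∀ z ∈ S, ∀ s t : ℝ, 0 ≤ s → s ≤ t → ‖x t - z‖ ≤ ‖x s - z‖ := by
    intro z hz s t hs hst
    have h := aux_anti (g := fun σ' => ‖x σ' - z‖ ^ 2)
      (G := fun σ => 2 * ⟪x σ - z, y σ - x σ⟫) (a := s) (b := t) hs
      (hgd z)
      (fun σ hσ => le_trans (hkeyD σ (le_trans hs hσ.1.le) z hz)
        (by nlinarith [sq_nonneg ‖y σ - x σ‖]))
      s ⟨le_rfl, hst⟩ t ⟨hst, le_rfl⟩ hst
    exact le_of_pow_le_pow_left₀ two_ne_zero (norm_nonneg _) h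
  have hdmono : ∀ s t : ℝ, 0 ≤ s → s ≤ t → infDist (x t) S ≤ infDist (x s) S := by
    intro s t hs hst
    by_contra hlt
    push_neg at hlt
    obtain ⟨z, hz, hdz⟩ := (infDist_lt_iff hS).1 hlt
    have : infDist (x t) S ≤ dist (x s) z := by
      calc infDist (x t) S ≤ dist (x t) z := infDist_le_dist_of_mem hz
        _ ≤ dist (x s) z := by
            rw [dist_eq_norm, dist_eq_norm]; exact hnorm_anti z hz s t hs hst
    linarith
  -- error bound step
  have hEBs : ∀ t, 0 ≤ t → ‖y t - x t‖ ^ p ≤ δ * θ →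
      infDist (x t) S ≤ C * ‖y t - x t‖ := by
    intro t ht hsmall
    have huA := hu t ht
    have hAne : (A (y t)).Nonempty := ⟨u t, huA⟩
    have hbdd : BddBelow ((fun ξ => ‖ξ‖) '' A (y t)) := by
      refine ⟨0, ?_⟩
      rintro _ ⟨v, _, rfl⟩
      exact norm_nonneg v
    have hsinf_le : sInf ((fun ξ => ‖ξ‖) '' A (y t)) ≤ ‖u t‖ :=
      csInf_le hbdd ⟨u t, huA, rfl⟩
    have hnu : ‖u t‖ = ‖y t - x t‖ / lam t := by
      rw [hudef]
      simp only [norm_smul, Real.norm_eq_abs, abs_of_pos (inv_pos.2 (hpos t ht)),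
        norm_sub_rev (x t) (y t)]
      ring
    have hup : ‖u t‖ * θ = ‖y t - x t‖ ^ p := by
      have hpe : p = (p - 1) + 1 := (Nat.sub_add_cancel hp).symm
      have hpow : ‖y t - x t‖ * ‖y t - x t‖ ^ (p - 1) = ‖y t - x t‖ ^ p := by
        conv_rhs => rw [hpe]
        rw [pow_succ]
        ring
      rw [hnu, div_mul_eq_mul_div, ← halg t ht, div_eq_iff (hpos t ht).ne', ← hpow]
      ring
    have huδ : ‖u t‖ ≤ δ := by
      have h1 : ‖u t‖ * θ ≤ δ * θ := by rw [hup]; exact hsmall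
      exact le_of_mul_le_mul_right h1 hθ
    have h1 := hEB (y t) hAne (le_trans hsinf_le huδ)
    have h2 : infDist (y t) S ≤ κ * ‖u t‖ :=
      le_trans h1 (mul_le_mul_of_nonneg_left hsinf_le hκ.le)
    have h3 : infDist (x t) S ≤ infDist (y t) S + dist (x t) (y t) :=
      infDist_le_infDist_add_dist
    have hlamt : lam 0 ≤ lam t := hlam h0mem ht ht
    have h4 : κ * ‖u t‖ ≤ κ / lam 0 * ‖y t - x t‖ := by
      rw [hnu, mul_div_assoc']
      rw [div_mul_eq_mul_div]
      exact div_le_div_of_nonneg_left (by positivity) hlam0 hlamt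
    have h5 : dist (x t) (y t) = ‖y t - x t‖ := by
      rw [dist_eq_norm, norm_sub_rev]
    rw [hCdef]
    calc infDist (x t) S ≤ κ * ‖u t‖ + ‖y t - x t‖ := by rw [← h5]; linarith
      _ ≤ κ / lam 0 * ‖y t - x t‖ + 1 * ‖y t - x t‖ := by
          rw [one_mul]; linarith
      _ = (1 + κ / lam 0) * ‖y t - x t‖ := by ring
  -- existence of a good starting time
  have hex : ∃ t₁ : ℝ, 0 ≤ t₁ ∧ infDist (x t₁) S ^ p ≤ δ * θ := by
    by_contra hno
    push_neg at hno
    set m : ℝ := min 1 (δ * θ / C ^ p) with hm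
    have hm0 : 0 < m := lt_min one_pos (div_pos (mul_pos hδ hθ) (pow_pos hC0 p))
    have hvlb : ∀ t, 0 ≤ t → m ≤ ‖y t - x t‖ := by
      intro t ht
      have hvp : δ * θ / C ^ p ≤ ‖y t - x t‖ ^ p := by
        by_cases hcase : ‖y t - x t‖ ^ p ≤ δ * θ
        · have hEBt := hEBs t ht hcase
          have hd : δ * θ < infDist (x t) S ^ p := hno t ht
          have hpow : infDist (x t) S ^ p ≤ C ^ p * ‖y t - x t‖ ^ p := by
            rw [← mul_pow]
            exact pow_le_pow_left₀ infDist_nonneg hEBt p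
          rw [div_le_iff₀ (pow_pos hC0 p)]
          nlinarith
        · push_neg at hcase
          have h1 : δ * θ / C ^ p ≤ δ * θ := by
            apply div_le_self (mul_pos hδ hθ).le
            calc (1:ℝ) = 1 ^ p := (one_pow p).symm
              _ ≤ C ^ p := pow_le_pow_left₀ zero_le_one hC1 p
          linarith
      rcases le_or_gt 1 ‖y t - x t‖ with h | h
      · exact le_trans (min_le_left _ _) h
      · have hple : ‖y t - x t‖ ^ p ≤ ‖y t - x t‖ :=
          pow_le_of_le_one (norm_nonneg _) h.le (by omega)
        exact le_trans (min_le_right _ _) (le_trans hvp hple)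
    set R : ℝ := ‖x 0 - z₀‖ ^ 2 with hR
    set T : ℝ := (R + 1) / (2 * m ^ 2) with hT
    have hT0 : 0 ≤ T := by positivity
    have hlin : ∀ σ : ℝ, HasDerivWithinAt (fun s : ℝ => 2 * m ^ 2 * s)
        (2 * m ^ 2) (Set.Ici 0) σ := by
      intro σ
      simpa using (hasDerivWithinAt_id σ (Set.Ici (0:ℝ))).const_mul (2 * m ^ 2)
    have hhd : ∀ σ ∈ Set.Ici (0:ℝ),
        HasDerivWithinAt (fun s => ‖x s - z₀‖ ^ 2 + 2 * m ^ 2 * s)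
          (2 * ⟪x σ - z₀, y σ - x σ⟫ + 2 * m ^ 2) (Set.Ici 0) σ :=
      fun σ hσ => (hgd z₀ σ hσ).add (hlin σ)
    have hmono' := aux_anti (le_refl (0:ℝ)) hhd (b := T)
      (fun σ hσ => by
        have h1 := hkeyD σ hσ.1.le z₀ hz₀
        have h2 := hvlb σ hσ.1.le
        nlinarith)
      0 ⟨le_rfl, hT0⟩ T ⟨hT0, le_rfl⟩ hT0
    have h2m : 2 * m ^ 2 * T = R + 1 := by
      rw [hT]
      field_simp
    simp only [mul_zero, add_zero, ← hR] at hmono'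
    nlinarith [sq_nonneg ‖x T - z₀‖]
  obtain ⟨t₀, ht₀, hdp⟩ := hex
  refine ⟨t₀, ht₀, ?_⟩
  intro t htt
  -- key pointwise inequality for times ≥ t₀
  have hkey2 : ∀ σ, t₀ ≤ σ → c * infDist (x σ) S ^ 2 ≤ 2 * ‖y σ - x σ‖ ^ 2 := by
    intro σ hσ
    have hσ0 : 0 ≤ σ := le_trans ht₀ hσ
    have hv1 : ‖y σ - x σ‖ ≤ infDist (x σ) S := hvled σ hσ0
    have hv2 : infDist (x σ) S ≤ infDist (x t₀) S := hdmono t₀ σ ht₀ hσ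
    have hv3 : ‖y σ - x σ‖ ^ p ≤ δ * θ := by
      calc ‖y σ - x σ‖ ^ p ≤ infDist (x t₀) S ^ p :=
            pow_le_pow_left₀ (norm_nonneg _) (le_trans hv1 hv2) p
        _ ≤ δ * θ := hdp
    have hEBt := hEBs σ hσ0 hv3
    have hsq : infDist (x σ) S ^ 2 ≤ C ^ 2 * ‖y σ - x σ‖ ^ 2 := by
      rw [← mul_pow]
      exact pow_le_pow_left₀ infDist_nonneg hEBt 2
    calc c * infDist (x σ) S ^ 2 ≤ c * (C ^ 2 * ‖y σ - x σ‖ ^ 2) :=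
          mul_le_mul_of_nonneg_left hsq hc0.le
      _ = (c * C ^ 2) * ‖y σ - x σ‖ ^ 2 := by ring
      _ = 2 * ‖y σ - x σ‖ ^ 2 := by rw [hcC]
  -- continuity of the squared distance
  have hx_cont : ContinuousOn x (Ici 0) := fun σ hσ => (hderiv σ hσ).continuousWithinAt
  have hf_cont : ContinuousOn (fun σ => infDist (x σ) S ^ 2) (Ici 0) :=
    ((continuous_infDist_pt S).comp_continuousOn hx_cont).pow 2
  -- Gronwall
  have hf' : ∀ τ ∈ Ico t₀ t, ∀ r, -c * infDist (x τ) S ^ 2 < r →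
      ∃ᶠ s in 𝓝[>] τ, (s - τ)⁻¹ * (infDist (x s) S ^ 2 - infDist (x τ) S ^ 2) < r := by
    intro τ hτ r hr
    have hτ0 : 0 ≤ τ := le_trans ht₀ hτ.1
    set ε₀ : ℝ := (r + c * infDist (x τ) S ^ 2) / 2 with hε₀
    have hε₀pos : 0 < ε₀ := by rw [hε₀]; linarith
    set M : ℝ := r - ε₀ with hM
    have hMgt : -c * infDist (x τ) S ^ 2 < M := by rw [hM, hε₀]; linarith
    have hcw : ContinuousWithinAt (fun σ => -c * infDist (x σ) S ^ 2) (Ici 0) τ :=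
      ((hf_cont τ hτ0).const_smul (-c) : _)
    have hev : ∀ᶠ σ in 𝓝[Ici 0] τ, -c * infDist (x σ) S ^ 2 < M :=
      hcw.eventually_lt_const hMgt
    have hev' : ∀ᶠ σ in 𝓝[≥] τ, -c * infDist (x σ) S ^ 2 < M :=
      hev.filter_mono (nhdsWithin_mono τ (Ici_subset_Ici.2 hτ0))
    obtain ⟨ρ, hρ, hsubI⟩ := mem_nhdsGE_iff_exists_Icc_subset.1 hev'
    rw [Filter.frequently_iff]
    intro U hU
    obtain ⟨u', hu', hUo⟩ := mem_nhdsGT_iff_exists_Ioo_subset.1 hU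
    set w : ℝ := min u' ρ with hw
    have hτw : τ < w := lt_min hu' hρ
    set s : ℝ := (τ + w) / 2 with hs
    have hs1 : τ < s := by rw [hs]; linarith
    have hs2 : s < w := by rw [hs]; linarith
    have hsu : s < u' := lt_of_lt_of_le hs2 (min_le_left _ _)
    have hsρ : s ≤ ρ := le_of_lt (lt_of_lt_of_le hs2 (min_le_right _ _))
    refine ⟨s, hUo ⟨hs1, hsu⟩, ?_⟩
    have hη : 0 < ε₀ * (s - τ) := mul_pos hε₀pos (by linarith)
    have hsqgt : infDist (x τ) S < Real.sqrt (infDist (x τ) S ^ 2 + ε₀ * (s - τ)) := by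
      rw [Real.lt_sqrt infDist_nonneg]
      linarith
    obtain ⟨z, hzS, hzd⟩ := (infDist_lt_iff hS).1 hsqgt
    rw [dist_eq_norm] at hzd
    have hE0 : 0 ≤ infDist (x τ) S ^ 2 + ε₀ * (s - τ) := by positivity
    have hz2 : ‖x τ - z‖ ^ 2 < infDist (x τ) S ^ 2 + ε₀ * (s - τ) := by
      nlinarith [Real.sq_sqrt hE0, Real.sqrt_nonneg (infDist (x τ) S ^ 2 + ε₀ * (s - τ)),
        norm_nonneg (x τ - z)]
    -- φ antitone on [τ, s]
    have hlin : ∀ σ : ℝ, HasDerivWithinAt (fun s' : ℝ => M * s') M (Set.Ici 0) σ := by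
      intro σ
      simpa using (hasDerivWithinAt_id σ (Set.Ici (0:ℝ))).const_mul M
    have hφd : ∀ σ ∈ Set.Ici (0:ℝ),
        HasDerivWithinAt (fun σ' => ‖x σ' - z‖ ^ 2 - M * σ')
          (2 * ⟪x σ - z, y σ - x σ⟫ - M) (Set.Ici 0) σ :=
      fun σ hσ => (hgd z σ hσ).sub (hlin σ)
    have hφ := aux_anti hτ0 hφd (b := s)
      (fun σ hσ => by
        have hσt₀ : t₀ ≤ σ := le_trans hτ.1 hσ.1.le
        have h1 := hkeyD σ (le_trans hτ0 hσ.1.le) z hzS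
        have h2 := hkey2 σ hσt₀
        have h3 : -c * infDist (x σ) S ^ 2 < M :=
          hsubI ⟨hσ.1.le, le_trans hσ.2.le hsρ⟩
        linarith)
      τ ⟨le_rfl, hs1.le⟩ s ⟨hs1.le, le_rfl⟩ hs1.le
    have hfs : infDist (x s) S ^ 2 ≤ ‖x s - z‖ ^ 2 := by
      have h1 : infDist (x s) S ≤ ‖x s - z‖ := by
        rw [← dist_eq_norm]; exact infDist_le_dist_of_mem hzS
      exact pow_le_pow_left₀ infDist_nonneg h1 2
    have hsτ : 0 < s - τ := by linarith
    rw [inv_mul_lt_iff₀ hsτ]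
    have hMε : M + ε₀ = r := by rw [hM]; ring
    nlinarith
  have hbound : ∀ σ ∈ Ico t₀ t,
      -c * infDist (x σ) S ^ 2 ≤ -c * infDist (x σ) S ^ 2 + 0 := fun σ _ => by linarith
  have hgron := le_gronwallBound_of_liminf_deriv_right_le
    (f := fun σ => infDist (x σ) S ^ 2) (f' := fun σ => -c * infDist (x σ) S ^ 2)
    (δ := infDist (x t₀) S ^ 2) (K := -c) (ε := 0) (a := t₀) (b := t)
    (hf_cont.mono (fun σ hσ => le_trans ht₀ hσ.1))
    hf' le_rfl hbound t ⟨htt, le_rfl⟩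
  rw [gronwallBound_ε0] at hgron
  -- conclude
  have hexp : Real.exp (-c * (t - t₀)) = Real.exp (-c * (t - t₀) / 2) ^ 2 := by
    rw [sq, ← Real.exp_add]
    ring_nf
  have hrhs0 : 0 ≤ infDist (x t₀) S * Real.exp (-c * (t - t₀) / 2) :=
    mul_nonneg infDist_nonneg (Real.exp_pos _).le
  have hsq : infDist (x t) S ^ 2
      ≤ (infDist (x t₀) S * Real.exp (-c * (t - t₀) / 2)) ^ 2 := by
    rw [mul_pow, ← hexp]
    exact hgron
  have hfinal := le_of_pow_le_pow_left₀ two_ne_zero hrhs0 hsq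
  calc infDist (x t) S ≤ infDist (x t₀) S * Real.exp (-c * (t - t₀) / 2) := hfinal
    _ = infDist (x t₀) S * Real.exp (-c * (t - t₀) / 2) := rfl
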